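/- Let U₁, ..., U_m be closed linear subspaces of a real Hilbert space H and let T = P_{U_m} ∘ P_{U_{m-1}} ∘ ... ∘ P_{U_1}. Then T is nonexpansive and Fix T = Fix T* = Fix(TT*) = Fix(T*T) = ⋂_{i=1}^m U_i. -/

import Mathlib

set_option linter.unusedSectionVars false
open Submodule

section Aux

variable {H : Type*} [NormedAddCommGroup H] [InnerProductSpace ℝ H] [CompleteSpace H]

private lemma proj_norm_le (V : Submodule ℝ H) [HasOrthogonalProjection V] (x : H) :
    ‖(V.subtypeL ∘L orthogonalProjection V) x‖ ≤ ‖x‖ := by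
  simpa using (orthogonalProjection V).le_opNorm x |>.trans
    (by nlinarith [orthogonalProjectionOnto_norm_le V, norm_nonneg x])

private lemma proj_norm_eq (V : Submodule ℝ H) [HasOrthogonalProjection V] (x : H)
    (h : ‖(V.subtypeL ∘L orthogonalProjection V) x‖ = ‖x‖) :
    (V.subtypeL ∘L orthogonalProjection V) x = x := by
  have h2 : ‖x‖ ^ 2 = ‖(orthogonalProjection V x : H)‖ ^ 2
      + ‖(orthogonalProjection Vᗮ x : H)‖ ^ 2 := norm_sq_eq_add_norm_sq_projection x V
  have h' : ‖(orthogonalProjection V x : H)‖ = ‖x‖ := h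
  have hb : ‖(orthogonalProjection V x : H)‖ ^ 2 = ‖x‖ ^ 2 := by rw [h']
  have : ‖(orthogonalProjection Vᗮ x : H)‖ ^ 2 = 0 := by linarith
  have h3 : (orthogonalProjection Vᗮ x : H) = 0 := by
    simpa using pow_eq_zero_iff (n := 2) (by norm_num) |>.mp this
  have : (orthogonalProjection V x : H) + (orthogonalProjection Vᗮ x : H) = x :=
    starProjection_add_starProjection_orthogonal (K := V) x
  rw [h3, add_zero] at this
  simpa using this

private lemma proj_selfAdjoint (V : Submodule ℝ H) [HasOrthogonalProjection V] :
    IsSelfAdjoint (V.subtypeL ∘L orthogonalProjection V) := by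
  rw [ContinuousLinearMap.isSelfAdjoint_iff_isSymmetric]
  exact starProjection_isSymmetric V

private lemma list_prod_norm_le (l : List (H →L[ℝ] H))
    (hl : ∀ P ∈ l, ∀ x : H, ‖P x‖ ≤ ‖x‖) (x : H) : ‖l.prod x‖ ≤ ‖x‖ := by
  induction l generalizing x with
  | nil => simp
  | cons a l ih =>
    rw [List.prod_cons, ContinuousLinearMap.mul_apply]
    exact (hl a (by simp) _).trans (ih (fun P hP => hl P (by simp [hP])) x)

private lemma list_prod_norm_eq (l : List (H →L[ℝ] H))
    (hl : ∀ P ∈ l, (∀ x : H, ‖P x‖ ≤ ‖x‖) ∧ ∀ x : H, ‖P x‖ = ‖x‖ → P x = x) (x : H)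
    (hx : ‖l.prod x‖ = ‖x‖) : ∀ P ∈ l, P x = x := by
  induction l generalizing x with
  | nil => simp
  | cons a l ih =>
    have hl' : ∀ P ∈ l, (∀ x : H, ‖P x‖ ≤ ‖x‖) ∧ ∀ x : H, ‖P x‖ = ‖x‖ → P x = x :=
      fun P hP => hl P (by simp [hP])
    rw [List.prod_cons, ContinuousLinearMap.mul_apply] at hx
    have hle : ‖l.prod x‖ ≤ ‖x‖ := list_prod_norm_le l (fun P hP => (hl' P hP).1) x
    have h1 : ‖l.prod x‖ = ‖x‖ :=
      le_antisymm hle (by rw [← hx]; exact (hl a (by simp)).1 _)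
    have hfix : ∀ P ∈ l, P x = x := ih hl' x h1
    have hprod : l.prod x = x := by
      clear hx hle h1 ih hl hl'
      induction l with
      | nil => simp
      | cons b l ihb =>
        rw [List.prod_cons, ContinuousLinearMap.mul_apply,
          ihb (fun P hP => hfix P (by simp [hP])), hfix b (by simp)]
    rw [hprod] at hx
    have hax : a x = x := (hl a (by simp)).2 x hx
    intro P hP
    rcases List.mem_cons.mp hP with h | h
    · rw [h]; exact hax
    · exact hfix P h

private lemma list_prod_fix (l : List (H →L[ℝ] H)) (x : H)
    (hfix : ∀ P ∈ l, P x = x) : l.prod x = x := by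
  induction l with
  | nil => simp
  | cons b l ihb =>
    rw [List.prod_cons, ContinuousLinearMap.mul_apply,
      ihb (fun P hP => hfix P (by simp [hP])), hfix b (by simp)]

private lemma adjoint_list_prod (l : List (H →L[ℝ] H))
    (hl : ∀ P ∈ l, IsSelfAdjoint P) :
    ContinuousLinearMap.adjoint l.prod = l.reverse.prod := by
  induction l with
  | nil => simpa using (IsSelfAdjoint.one (R := H →L[ℝ] H)).adjoint_eq
  | cons a l ih =>
    rw [List.prod_cons, List.reverse_cons, List.prod_append, List.prod_singleton,
      ← ContinuousLinearMap.star_eq_adjoint, star_mul,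
      ContinuousLinearMap.star_eq_adjoint, ContinuousLinearMap.star_eq_adjoint,
      ih (fun P hP => hl P (by simp [hP])), (hl a (by simp)).adjoint_eq]

end Aux

/-- For closed linear subspaces `U₁, …, U_m` and `T = P_{U_m} ∘ ⋯ ∘ P_{U_1}`, the operator
`T` is nonexpansive and `Fix T = Fix T* = Fix (T T*) = Fix (T* T) = ⋂ᵢ Uᵢ`. -/
theorem fix_prod_projections {H : Type*} [NormedAddCommGroup H] [InnerProductSpace ℝ H]
    [CompleteSpace H] {m : ℕ} (U : Fin m → Submodule ℝ H)
    [∀ i, Submodule.HasOrthogonalProjection (U i)] (T : H →L[ℝ] H)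
    (hT : T = ((List.ofFn fun i : Fin m =>
        (U i).subtypeL ∘L Submodule.orthogonalProjectionOnto (U i)).reverse).prod) :
    (∀ x : H, ‖T x‖ ≤ ‖x‖) ∧
      LinearMap.ker ((1 - T : H →L[ℝ] H) : H →ₗ[ℝ] H) = ⨅ i, U i ∧
      LinearMap.ker ((1 - ContinuousLinearMap.adjoint T : H →L[ℝ] H) : H →ₗ[ℝ] H) = ⨅ i, U i ∧
      LinearMap.ker ((1 - T * ContinuousLinearMap.adjoint T : H →L[ℝ] H) : H →ₗ[ℝ] H) = ⨅ i, U i ∧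
      LinearMap.ker ((1 - ContinuousLinearMap.adjoint T * T : H →L[ℝ] H) : H →ₗ[ℝ] H) = ⨅ i, U i := by
  set l : List (H →L[ℝ] H) :=
    List.ofFn fun i : Fin m => (U i).subtypeL ∘L orthogonalProjection (U i) with hl
  have hmem : ∀ P ∈ l, ∃ i : Fin m, P = (U i).subtypeL ∘L orthogonalProjection (U i) := by
    intro P hP
    rw [hl, List.mem_ofFn] at hP
    obtain ⟨i, hi⟩ := hP
    exact ⟨i, hi.symm⟩
  have hgood : ∀ P ∈ l, (∀ x : H, ‖P x‖ ≤ ‖x‖) ∧ ∀ x : H, ‖P x‖ = ‖x‖ → P x = x := by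
    intro P hP
    obtain ⟨i, rfl⟩ := hmem P hP
    exact ⟨proj_norm_le (U i), proj_norm_eq (U i)⟩
  have hgoodr : ∀ P ∈ l.reverse, (∀ x : H, ‖P x‖ ≤ ‖x‖) ∧ ∀ x : H, ‖P x‖ = ‖x‖ → P x = x := by
    intro P hP; exact hgood P (List.mem_reverse.mp hP)
  have hsa : ∀ P ∈ l.reverse, IsSelfAdjoint P := by
    intro P hP
    obtain ⟨i, rfl⟩ := hmem P (List.mem_reverse.mp hP)
    exact proj_selfAdjoint (U i)
  have hTstar : ContinuousLinearMap.adjoint T = l.prod := by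
    rw [hT, adjoint_list_prod _ hsa, List.reverse_reverse]
  -- key: norm-equality implies membership in all subspaces
  have hmem_of_fix : ∀ x : H, (∀ P ∈ l, P x = x) → x ∈ ⨅ i, U i := by
    intro x hx
    rw [Submodule.mem_iInf]
    intro i
    have hi : ((U i).subtypeL ∘L orthogonalProjection (U i)) x = x :=
      hx _ (by rw [hl, List.mem_ofFn]; exact ⟨i, rfl⟩)
    rw [← hi]
    exact ((orthogonalProjection (U i)) x).2
  have hfix_of_mem : ∀ x : H, x ∈ ⨅ i, U i → ∀ P ∈ l, P x = x := by
    intro x hx P hP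
    obtain ⟨i, rfl⟩ := hmem P hP
    have : x ∈ U i := (Submodule.mem_iInf _).mp hx i
    have h : (orthogonalProjection (U i) x : H) = x := starProjection_eq_self_iff.mpr this
    exact h
  have hnormle : ∀ x : H, ‖T x‖ ≤ ‖x‖ := by
    intro x
    rw [hT]
    exact list_prod_norm_le _ (fun P hP => (hgoodr P hP).1) x
  have hnormle' : ∀ x : H, ‖ContinuousLinearMap.adjoint T x‖ ≤ ‖x‖ := by
    intro x
    rw [hTstar]
    exact list_prod_norm_le _ (fun P hP => (hgood P hP).1) x
  -- norm equality gives membership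
  have hkey : ∀ x : H, ‖T x‖ = ‖x‖ → x ∈ ⨅ i, U i := by
    intro x hx
    rw [hT] at hx
    exact hmem_of_fix x fun P hP =>
      list_prod_norm_eq l.reverse hgoodr x hx P (List.mem_reverse.mpr hP)
  have hkey' : ∀ x : H, ‖ContinuousLinearMap.adjoint T x‖ = ‖x‖ → x ∈ ⨅ i, U i := by
    intro x hx
    rw [hTstar] at hx
    exact hmem_of_fix x (list_prod_norm_eq l hgood x hx)
  have hTfix : ∀ x : H, x ∈ ⨅ i, U i → T x = x := by
    intro x hx
    rw [hT]
    exact list_prod_fix _ x fun P hP => hfix_of_mem x hx P (List.mem_reverse.mp hP)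
  have hTsfix : ∀ x : H, x ∈ ⨅ i, U i → ContinuousLinearMap.adjoint T x = x := by
    intro x hx
    rw [hTstar]
    exact list_prod_fix _ x (hfix_of_mem x hx)
  have hker : ∀ S : H →L[ℝ] H, ∀ x : H, x ∈ LinearMap.ker ((1 - S : H →L[ℝ] H) : H →ₗ[ℝ] H) ↔ S x = x := by
    intro S x
    rw [LinearMap.mem_ker]
    constructor
    · intro h
      have h2 : x - S x = 0 := by
        simpa [ContinuousLinearMap.sub_apply] using h
      exact (sub_eq_zero.mp h2).symm
    · intro h
      show (1 - S) x = 0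
      simp [ContinuousLinearMap.sub_apply, h]
  refine ⟨hnormle, ?_, ?_, ?_, ?_⟩
  · ext x
    rw [hker]
    constructor
    · intro h
      exact hkey x (by rw [h])
    · exact hTfix x
  · ext x
    rw [hker]
    constructor
    · intro h
      exact hkey' x (by rw [h])
    · exact hTsfix x
  · ext x
    rw [hker]
    constructor
    · intro h
      rw [ContinuousLinearMap.mul_apply] at h
      -- T (T* x) = x implies ‖T* x‖ = ‖x‖
      have h1 : ‖x‖ ≤ ‖ContinuousLinearMap.adjoint T x‖ := by
        calc ‖x‖ = ‖T (ContinuousLinearMap.adjoint T x)‖ := by rw [h]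
        _ ≤ ‖ContinuousLinearMap.adjoint T x‖ := hnormle _
      have h2 : ‖ContinuousLinearMap.adjoint T x‖ = ‖x‖ := le_antisymm (hnormle' x) h1
      have hx : x ∈ ⨅ i, U i := hkey' x h2
      exact hx
    · intro hx
      rw [ContinuousLinearMap.mul_apply, hTsfix x hx, hTfix x hx]
  · ext x
    rw [hker]
    constructor
    · intro h
      rw [ContinuousLinearMap.mul_apply] at h
      have h1 : ‖x‖ ≤ ‖T x‖ := by
        calc ‖x‖ = ‖ContinuousLinearMap.adjoint T (T x)‖ := by rw [h]
        _ ≤ ‖T x‖ := hnormle' _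
      exact hkey x (le_antisymm (hnormle x) h1)
    · intro hx
      rw [ContinuousLinearMap.mul_apply, hTfix x hx, hTsfix x hx]
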